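/- For each a ∈ [0,1], the set L_a = { ℓ ∈ L : G(ℓ) = a } is a convex set, and it is compact in L¹([0,1]). -/

import Mathlib

open Set MeasureTheory

/-- Membership in the class `L`: convex `ℓ : [0,1] → [0,1]`, `ℓ 0 = 0` and
`ℓ 1 = sup_{[0,1)} ℓ`. -/
def MemLorenz (ℓ : ℝ → ℝ) : Prop :=
  ConvexOn ℝ (Icc (0:ℝ) 1) ℓ ∧ (∀ t ∈ Icc (0:ℝ) 1, ℓ t ∈ Icc (0:ℝ) 1) ∧
    ℓ 0 = 0 ∧ ℓ 1 = sSup (ℓ '' Ico (0:ℝ) 1)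

/-- The Gini index `G(ℓ) = 1 - 2∫₀¹ ℓ`. -/
noncomputable def Gini (ℓ : ℝ → ℝ) : ℝ := 1 - 2 * ∫ t in (0:ℝ)..1, ℓ t

lemma MemLorenz.monotoneOn {ℓ : ℝ → ℝ} (h : MemLorenz ℓ) : MonotoneOn ℓ (Icc (0:ℝ) 1) := by
  obtain ⟨hcv, hrange, h0, -⟩ := h
  intro x hx y hy hxy
  rcases eq_or_lt_of_le hy.1 with hy0 | hy0
  · have hx0 : x = 0 := le_antisymm (hxy.trans hy0.symm.le) hx.1
    rw [hx0, ← hy0]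
  · have hb : 0 ≤ x / y := div_nonneg hx.1 hy0.le
    have hb1 : x / y ≤ 1 := div_le_one_of_le₀ hxy hy0.le
    have key := hcv.2 (by constructor <;> norm_num : (0:ℝ) ∈ Icc (0:ℝ) 1) hy
      (by linarith : (0:ℝ) ≤ 1 - x / y) hb (by ring)
    simp only [smul_eq_mul, mul_zero, zero_add, mul_one] at key
    rw [div_mul_cancel₀ _ (ne_of_gt hy0)] at key
    have hy1 : 0 ≤ ℓ y := (hrange y hy).1
    calc ℓ x ≤ (1 - x / y) * ℓ 0 + x / y * ℓ y := key
    _ = x / y * ℓ y := by rw [h0]; ring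
    _ ≤ 1 * ℓ y := by apply mul_le_mul_of_nonneg_right hb1 hy1
    _ = ℓ y := one_mul _

lemma MemLorenz.le_linear {ℓ : ℝ → ℝ} (h : MemLorenz ℓ) {x : ℝ} (hx : x ∈ Icc (0:ℝ) 1) :
    ℓ x ≤ x * ℓ 1 := by
  obtain ⟨hcv, hrange, h0, -⟩ := h
  have key := hcv.2 (by constructor <;> norm_num : (0:ℝ) ∈ Icc (0:ℝ) 1)
    (by constructor <;> norm_num : (1:ℝ) ∈ Icc (0:ℝ) 1)
    (by linarith [hx.2] : (0:ℝ) ≤ 1 - x) hx.1 (by ring)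
  simp only [smul_eq_mul, mul_zero, zero_add, mul_one] at key
  rw [h0] at key; linarith

lemma MemLorenz.sup_approx {ℓ : ℝ → ℝ} (h : MemLorenz ℓ) {ε : ℝ} (hε : 0 < ε) :
    ∃ s ∈ Ico (0:ℝ) 1, ∀ t, s ≤ t → t < 1 → ℓ 1 - ε ≤ ℓ t := by
  have hne : (ℓ '' Ico (0:ℝ) 1).Nonempty := ⟨ℓ 0, ⟨0, by constructor <;> norm_num, rfl⟩⟩
  have hlt : ℓ 1 - ε < sSup (ℓ '' Ico (0:ℝ) 1) := by rw [← h.2.2.2]; linarith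
  obtain ⟨b, ⟨s, hs, rfl⟩, hbs⟩ := exists_lt_of_lt_csSup hne hlt
  refine ⟨s, hs, fun t hst ht1 => ?_⟩
  have hmem_s : s ∈ Icc (0:ℝ) 1 := ⟨hs.1, hs.2.le⟩
  have hmem_t : t ∈ Icc (0:ℝ) 1 := ⟨hs.1.trans hst, ht1.le⟩
  exact le_trans hbs.le (h.monotoneOn hmem_s hmem_t hst)

lemma MemLorenz.nonneg {ℓ : ℝ → ℝ} (h : MemLorenz ℓ) {x : ℝ} (hx : x ∈ Icc (0:ℝ) 1) :
    0 ≤ ℓ x := (h.2.1 x hx).1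

lemma MemLorenz.le_one {ℓ : ℝ → ℝ} (h : MemLorenz ℓ) {x : ℝ} (hx : x ∈ Icc (0:ℝ) 1) :
    ℓ x ≤ 1 := (h.2.1 x hx).2

lemma convex_La (a : ℝ) : Convex ℝ {ℓ : ℝ → ℝ | MemLorenz ℓ ∧ Gini ℓ = a} := by
  rintro f ⟨hf, hfG⟩ g ⟨hg, hgG⟩ c d hc hd hcd
  have h01 : (0:ℝ) ∈ Icc (0:ℝ) 1 := by constructor <;> norm_num
  have h11 : (1:ℝ) ∈ Icc (0:ℝ) 1 := by constructor <;> norm_num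
  have happ : ∀ t : ℝ, (c • f + d • g) t = c * f t + d * g t := fun t => rfl
  constructor
  · refine ⟨(hf.1.smul hc).add (hg.1.smul hd), ?_, ?_, ?_⟩
    · intro t ht
      rw [happ]
      constructor
      · have := hf.nonneg ht; have := hg.nonneg ht; positivity
      · have h1 := hf.le_one ht; have h2 := hg.le_one ht
        nlinarith
    · rw [happ, hf.2.2.1, hg.2.2.1]; ring
    · set φ := c • f + d • g with hφ
      have hub : ∀ b ∈ φ '' Ico (0:ℝ) 1, b ≤ φ 1 := by
        rintro b ⟨t, ht, rfl⟩
        have htI : t ∈ Icc (0:ℝ) 1 := ⟨ht.1, ht.2.le⟩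
        rw [happ, happ]
        have h1 := hf.monotoneOn htI h11 ht.2.le
        have h2 := hg.monotoneOn htI h11 ht.2.le
        nlinarith
      have hne : (φ '' Ico (0:ℝ) 1).Nonempty := ⟨φ 0, ⟨0, by constructor <;> norm_num, rfl⟩⟩
      refine le_antisymm ?_ (csSup_le hne hub)
      refine le_of_forall_pos_le_add fun ε hε => ?_
      obtain ⟨s₁, hs₁, hf1⟩ := hf.sup_approx hε
      obtain ⟨s₂, hs₂, hg1⟩ := hg.sup_approx hε
      set t := max s₁ s₂ with htdef
      have htI : t ∈ Ico (0:ℝ) 1 := ⟨le_max_of_le_left hs₁.1, max_lt hs₁.2 hs₂.2⟩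
      have h1 := hf1 t (le_max_left _ _) htI.2
      have h2 := hg1 t (le_max_right _ _) htI.2
      have hmem : φ t ∈ φ '' Ico (0:ℝ) 1 := ⟨t, htI, rfl⟩
      have hle : φ t ≤ sSup (φ '' Ico (0:ℝ) 1) := le_csSup ⟨φ 1, hub⟩ hmem
      rw [happ] at hle ⊢
      nlinarith
  · have hfint : IntervalIntegrable f volume 0 1 := by
      apply MonotoneOn.intervalIntegrable
      rw [uIcc_of_le (by norm_num : (0:ℝ) ≤ 1)]
      exact hf.monotoneOn
    have hgint : IntervalIntegrable g volume 0 1 := by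
      apply MonotoneOn.intervalIntegrable
      rw [uIcc_of_le (by norm_num : (0:ℝ) ≤ 1)]
      exact hg.monotoneOn
    have : (∫ t in (0:ℝ)..1, (c • f + d • g) t) = c * (∫ t in (0:ℝ)..1, f t) + d * ∫ t in (0:ℝ)..1, g t := by
      simp only [happ]
      rw [intervalIntegral.integral_add (hfint.const_mul c) (hgint.const_mul d),
        intervalIntegral.integral_const_mul, intervalIntegral.integral_const_mul]
    unfold Gini at hfG hgG ⊢
    rw [this]
    linear_combination (a - 1) * hcd + c * hfG + d * hgG

noncomputable def stepf (n : ℕ) (w : ℕ → ℕ) : ℝ → ℝ :=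
  fun t => ∑ k ∈ Finset.range n,
    (Ico ((k : ℝ)/(n : ℝ)) (((k : ℝ)+1)/(n : ℝ))).indicator (fun _ => (w k : ℝ)/(n : ℝ)) t

lemma stepf_integrable (n : ℕ) (w : ℕ → ℕ) (ν : Measure ℝ) [IsFiniteMeasure ν] :
    Integrable (stepf n w) ν := by
  apply integrable_finset_sum
  intro k _
  exact (integrable_const _).indicator measurableSet_Ico

lemma piece_disjoint {n : ℕ} {j k : ℕ} (hjk : j ≠ k) :
    Disjoint (Ico ((j : ℝ)/(n : ℝ)) (((j : ℝ)+1)/(n : ℝ)))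
      (Ico ((k : ℝ)/(n : ℝ)) (((k : ℝ)+1)/(n : ℝ))) := by
  have key : ∀ j k : ℕ, j < k →
      Disjoint (Ico ((j : ℝ)/(n : ℝ)) (((j : ℝ)+1)/(n : ℝ)))
        (Ico ((k : ℝ)/(n : ℝ)) (((k : ℝ)+1)/(n : ℝ))) := by
    intro j k h
    rw [Set.Ico_disjoint_Ico]
    have h1 : ((j : ℝ)+1) ≤ (k : ℝ) := by exact_mod_cast h
    rcases Nat.eq_zero_or_pos n with hn | hn
    · subst hn; simp
    have hn' : (0:ℝ) < n := by exact_mod_cast hn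
    have : ((j : ℝ)+1)/(n:ℝ) ≤ (k : ℝ)/(n:ℝ) := by gcongr
    calc (((j : ℝ)+1)/(n : ℝ)) ⊓ (((k : ℝ)+1)/(n : ℝ)) ≤ ((j : ℝ)+1)/(n : ℝ) := min_le_left _ _
      _ ≤ (k : ℝ)/(n:ℝ) := this
      _ ≤ ((j : ℝ)/(n : ℝ)) ⊔ ((k : ℝ)/(n : ℝ)) := le_max_right _ _
  rcases hjk.lt_or_gt with h | h
  · exact key j k h
  · exact (key k j h).symm

lemma piece_union {n : ℕ} (hn : 0 < n) :
    (⋃ k ∈ Finset.range n, Ico ((k : ℝ)/(n : ℝ)) (((k : ℝ)+1)/(n : ℝ))) = Ico (0:ℝ) 1 := by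
  have hn' : (0:ℝ) < n := by exact_mod_cast hn
  ext t
  simp only [mem_iUnion, Finset.mem_range, mem_Ico, exists_prop]
  constructor
  · rintro ⟨k, hk, h1, h2⟩
    refine ⟨le_trans (by positivity) h1, lt_of_lt_of_le h2 ?_⟩
    rw [div_le_one hn']
    have : (k : ℝ) + 1 ≤ (n : ℝ) := by exact_mod_cast hk
    linarith
  · rintro ⟨h0, h1⟩
    refine ⟨⌊(n : ℝ) * t⌋₊, ?_, ?_, ?_⟩
    · have : (n : ℝ) * t < n := by nlinarith
      have := Nat.floor_lt (by positivity : (0:ℝ) ≤ (n:ℝ) * t) |>.2 this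
      exact_mod_cast this
    · rw [div_le_iff₀ hn']
      calc ((⌊(n : ℝ) * t⌋₊ : ℝ)) ≤ (n : ℝ) * t := Nat.floor_le (by positivity)
        _ = t * n := mul_comm _ _
    · rw [lt_div_iff₀ hn']
      calc t * n = (n : ℝ) * t := mul_comm _ _
        _ < (⌊(n : ℝ) * t⌋₊ : ℝ) + 1 := Nat.lt_floor_add_one _

lemma stepf_eq_on_piece {n : ℕ} (w : ℕ → ℕ) {k : ℕ} (hk : k < n) {x : ℝ}
    (hx : x ∈ Ico ((k : ℝ)/(n : ℝ)) (((k : ℝ)+1)/(n : ℝ))) :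
    stepf n w x = (w k : ℝ)/(n : ℝ) := by
  unfold stepf
  rw [Finset.sum_eq_single_of_mem k (Finset.mem_range.mpr hk)]
  · exact indicator_of_mem hx _
  · intro j _ hjk
    exact indicator_of_notMem
      (fun hmem => absurd hx (Set.disjoint_left.mp (piece_disjoint hjk) hmem)) _

/-- The key total boundedness estimate. -/
lemma dist_le_of_monotone {n : ℕ} (hn : 0 < n) {ℓ : ℝ → ℝ}
    (hmono : MonotoneOn ℓ (Icc (0:ℝ) 1)) (hrange : ∀ t ∈ Icc (0:ℝ) 1, ℓ t ∈ Icc (0:ℝ) 1)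
    (hint : IntegrableOn ℓ (Icc (0:ℝ) 1) volume) :
    ∫ x in Icc (0:ℝ) 1, |ℓ x - stepf n (fun k => ⌊(n:ℝ) * ℓ ((k : ℝ)/(n : ℝ))⌋₊) x| ≤ 2/(n:ℝ) := by
  have hn' : (0:ℝ) < n := by exact_mod_cast hn
  set w : ℕ → ℕ := fun k => ⌊(n:ℝ) * ℓ ((k : ℝ)/(n : ℝ))⌋₊ with hw
  set s : ℝ → ℝ := stepf n w with hs
  -- pieces
  set P : ℕ → Set ℝ := fun k => Ico ((k : ℝ)/(n : ℝ)) (((k : ℝ)+1)/(n : ℝ)) with hP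
  have hPsub : ∀ k, k < n → P k ⊆ Icc (0:ℝ) 1 := by
    intro k hk x hx
    have h1 : (0:ℝ) ≤ (k : ℝ)/(n : ℝ) := by positivity
    have h2 : ((k : ℝ)+1)/(n : ℝ) ≤ 1 := by
      rw [div_le_one hn']; exact_mod_cast hk
    exact ⟨le_trans h1 hx.1, le_trans hx.2.le h2⟩
  have hsint : ∀ k, IntegrableOn s (P k) volume := by
    intro k
    have : IsFiniteMeasure (volume.restrict (P k)) := by
      constructor
      rw [Measure.restrict_apply_univ, hP]
      exact measure_Ico_lt_top
    exact stepf_integrable n w _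
  have hlint : ∀ k, k < n → IntegrableOn ℓ (P k) volume :=
    fun k hk => hint.mono_set (hPsub k hk)
  have habs : ∀ k, k < n → IntegrableOn (fun x => |ℓ x - s x|) (P k) volume :=
    fun k hk => ((hlint k hk).sub (hsint k)).abs
  -- rewrite domain
  have hIccIco : ∫ x in Icc (0:ℝ) 1, |ℓ x - s x| = ∫ x in Ico (0:ℝ) 1, |ℓ x - s x| := by
    rw [Measure.restrict_congr_set (Ico_ae_eq_Icc (μ := volume) (a := (0:ℝ)) (b := 1)).symm]
  rw [hIccIco, ← piece_union hn]
  rw [integral_biUnion_finset (Finset.range n) (fun k _ => measurableSet_Ico)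
    (fun j _ k _ hjk => piece_disjoint hjk) (fun k hk => habs k (Finset.mem_range.mp hk))]
  -- per-piece bound
  have hbound : ∀ k, k < n →
      ∫ x in P k, |ℓ x - s x| ≤ (ℓ (((k : ℝ)+1)/(n : ℝ)) - ℓ ((k : ℝ)/(n : ℝ)) + 1/(n:ℝ)) * (1/(n:ℝ)) := by
    intro k hk
    have hkIcc : (k : ℝ)/(n : ℝ) ∈ Icc (0:ℝ) 1 := by
      constructor
      · positivity
      · rw [div_le_one hn']
        have : (k:ℝ) < n := by exact_mod_cast hk
        linarith
    have hk1Icc : ((k : ℝ)+1)/(n : ℝ) ∈ Icc (0:ℝ) 1 := by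
      constructor
      · positivity
      · rw [div_le_one hn']; exact_mod_cast hk
    have hflo : (w k : ℝ) ≤ (n:ℝ) * ℓ ((k : ℝ)/(n : ℝ)) := by
      apply Nat.floor_le
      have := (hrange _ hkIcc).1
      positivity
    have hfhi : (n:ℝ) * ℓ ((k : ℝ)/(n : ℝ)) < (w k : ℝ) + 1 := Nat.lt_floor_add_one _
    have hptw : ∀ x ∈ P k, |ℓ x - s x| ≤ ℓ (((k : ℝ)+1)/(n : ℝ)) - ℓ ((k : ℝ)/(n : ℝ)) + 1/(n:ℝ) := by
      intro x hx
      have hxIcc : x ∈ Icc (0:ℝ) 1 := hPsub k hk hx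
      rw [hs, stepf_eq_on_piece w hk hx]
      have h1 : ℓ ((k : ℝ)/(n : ℝ)) ≤ ℓ x := hmono hkIcc hxIcc hx.1
      have h2 : ℓ x ≤ ℓ (((k : ℝ)+1)/(n : ℝ)) := hmono hxIcc hk1Icc hx.2.le
      have h3 : (w k : ℝ)/(n:ℝ) ≤ ℓ ((k : ℝ)/(n : ℝ)) := by
        rw [div_le_iff₀ hn']; linarith
      have h4 : ℓ ((k : ℝ)/(n : ℝ)) - 1/(n:ℝ) < (w k : ℝ)/(n:ℝ) := by
        rw [sub_lt_iff_lt_add, ← add_div, lt_div_iff₀ hn']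
        linarith
      rw [abs_of_nonneg (by linarith)]
      linarith
    have hmeas : (volume (P k)) < ⊤ := measure_Ico_lt_top
    have := norm_setIntegral_le_of_norm_le_const (μ := volume) (s := P k) (f := fun x => |ℓ x - s x|) hmeas
      (fun x hx => by rw [Real.norm_eq_abs, abs_abs]; exact hptw x hx)
    have hvol : (volume (P k)).toReal = 1/(n:ℝ) := by
      have heq : ((k:ℝ)+1)/(n:ℝ) - (k:ℝ)/(n:ℝ) = 1/(n:ℝ) := by ring
      rw [hP]
      simp only [Real.volume_Ico]
      rw [heq, ENNReal.toReal_ofReal (by positivity)]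
    calc ∫ x in P k, |ℓ x - s x| ≤ ‖∫ x in P k, |ℓ x - s x|‖ := le_abs_self _
      _ ≤ (ℓ (((k : ℝ)+1)/(n : ℝ)) - ℓ ((k : ℝ)/(n : ℝ)) + 1/(n:ℝ)) * (volume (P k)).toReal := this
      _ = (ℓ (((k : ℝ)+1)/(n : ℝ)) - ℓ ((k : ℝ)/(n : ℝ)) + 1/(n:ℝ)) * (1/(n:ℝ)) := by rw [hvol]
  calc ∑ k ∈ Finset.range n, ∫ x in P k, |ℓ x - s x|
      ≤ ∑ k ∈ Finset.range n, (ℓ (((k : ℝ)+1)/(n : ℝ)) - ℓ ((k : ℝ)/(n : ℝ)) + 1/(n:ℝ)) * (1/(n:ℝ)) :=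
        Finset.sum_le_sum (fun k hk => hbound k (Finset.mem_range.mp hk))
    _ = ∑ k ∈ Finset.range n, ((ℓ (((k : ℝ)+1)/(n : ℝ)) - ℓ ((k : ℝ)/(n : ℝ))) * (1/(n:ℝ))
          + (1/(n:ℝ)) * (1/(n:ℝ))) := Finset.sum_congr rfl (fun k _ => by ring)
    _ = (∑ k ∈ Finset.range n, (ℓ (((k : ℝ)+1)/(n : ℝ)) - ℓ ((k : ℝ)/(n : ℝ)))) * (1/(n:ℝ))
        + (n : ℝ) * (1/(n:ℝ) * (1/(n:ℝ))) := by
      rw [Finset.sum_add_distrib, ← Finset.sum_mul, Finset.sum_const, Finset.card_range, nsmul_eq_mul]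
    _ ≤ 2/(n:ℝ) := by
      have htel := Finset.sum_range_sub (f := fun k : ℕ => ℓ ((k:ℝ)/(n:ℝ))) n
      push_cast at htel
      have hnn : ((n:ℝ))/(n:ℝ) = 1 := div_self (ne_of_gt hn')
      have h00 : ((0:ℝ))/(n:ℝ) = 0 := zero_div _
      rw [hnn, h00] at htel
      have h6 : (∑ k ∈ Finset.range n, (ℓ (((k : ℝ)+1)/(n : ℝ)) - ℓ ((k : ℝ)/(n : ℝ)))) ≤ 1 := by
        rw [htel]
        have := (hrange 1 (by constructor <;> norm_num)).2
        have := (hrange 0 (by constructor <;> norm_num)).1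
        linarith
      have h7 : (0:ℝ) ≤ 1/(n:ℝ) := by positivity
      have h8 := mul_le_mul_of_nonneg_right h6 h7
      have h5 : (n:ℝ)*(1/(n:ℝ)*(1/(n:ℝ))) = 1/(n:ℝ) := by field_simp
      have h9 : 2/(n:ℝ) = 1/(n:ℝ) + 1/(n:ℝ) := by ring
      linarith

lemma totallyBounded_T :
    TotallyBounded {F : Lp ℝ 1 (volume.restrict (Icc (0:ℝ) 1)) |
      ∃ ℓ : ℝ → ℝ, MonotoneOn ℓ (Icc (0:ℝ) 1) ∧ (∀ t ∈ Icc (0:ℝ) 1, ℓ t ∈ Icc (0:ℝ) 1) ∧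
        (⇑F : ℝ → ℝ) =ᵐ[volume.restrict (Icc (0:ℝ) 1)] ℓ} := by
  set μ := volume.restrict (Icc (0:ℝ) 1) with hμ
  rw [Metric.totallyBounded_iff]
  intro ε hε
  obtain ⟨n, hn⟩ := exists_nat_gt (2/ε)
  have hpos : (0:ℝ) < 2/ε := by positivity
  have hn' : (0:ℝ) < n := lt_trans hpos hn
  have hn0 : 0 < n := by exact_mod_cast hn'
  have h2n : 2/(n:ℝ) < ε := by
    rw [div_lt_iff₀ hn']
    rw [div_lt_iff₀ hε] at hn
    linarith [hn]
  have hmemv : ∀ v : Fin n → Fin (n+1),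
      MemLp (stepf n (fun k => if h : k < n then (v ⟨k, h⟩ : ℕ) else 0)) 1 μ :=
    fun v => memLp_one_iff_integrable.mpr (stepf_integrable _ _ _)
  refine ⟨(fun v : Fin n → Fin (n+1) => ((hmemv v).toLp _)) '' univ, Set.finite_univ.image _, ?_⟩
  rintro F ⟨ℓ, hmono, hrange, hae⟩
  set w : ℕ → ℕ := fun k => ⌊(n:ℝ) * ℓ ((k : ℝ)/(n : ℝ))⌋₊ with hwdef
  have hwlt : ∀ k : Fin n, w (k : ℕ) < n + 1 := by
    intro k
    have hkIcc : ((k:ℕ):ℝ)/(n:ℝ) ∈ Icc (0:ℝ) 1 := by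
      constructor
      · positivity
      · rw [div_le_one hn']
        exact_mod_cast (k.isLt.le)
    have hle : (n:ℝ) * ℓ (((k:ℕ):ℝ)/(n:ℝ)) ≤ (n:ℝ) := by
      have := (hrange _ hkIcc).2
      nlinarith
    have := Nat.floor_le_floor hle
    rw [Nat.floor_natCast] at this
    exact Nat.lt_succ_of_le this
  set v : Fin n → Fin (n+1) := fun k => ⟨w (k : ℕ), hwlt k⟩ with hvdef
  have hw' : stepf n (fun k => if h : k < n then (v ⟨k, h⟩ : ℕ) else 0) = stepf n w := by
    unfold stepf
    funext t
    apply Finset.sum_congr rfl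
    intro k hk
    have hkn := Finset.mem_range.mp hk
    simp only [dif_pos hkn]
    rfl
  refine mem_iUnion₂.mpr ⟨_, ⟨v, mem_univ _, rfl⟩, ?_⟩
  rw [Metric.mem_ball, dist_eq_norm]
  have hint : IntegrableOn ℓ (Icc (0:ℝ) 1) volume := (L1.integrable_coeFn F).congr hae
  have hfun : stepf n (fun k => if h : k < n then (v ⟨k, h⟩ : ℕ) else 0) =ᵐ[μ] stepf n w := by
    rw [hw']
  have hcoe : (⇑((hmemv v).toLp _) : ℝ → ℝ) =ᵐ[μ] stepf n w :=
    ((hmemv v).coeFn_toLp).trans hfun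
  have hnorm : ‖F - (hmemv v).toLp _‖ = ∫ x, |ℓ x - stepf n w x| ∂μ := by
    rw [L1.norm_eq_integral_norm]
    apply integral_congr_ae
    filter_upwards [Lp.coeFn_sub F ((hmemv v).toLp _), hae, hcoe] with x e1 e2 e3
    rw [e1, Pi.sub_apply, e2, e3, Real.norm_eq_abs]
  rw [hnorm]
  calc ∫ x, |ℓ x - stepf n w x| ∂μ ≤ 2/(n:ℝ) :=
      dist_le_of_monotone hn0 hmono hrange hint
    _ < ε := h2n

open Filter in
lemma exists_memLorenz_limit (Fx : ℝ → ℝ) (φ : ℕ → ℝ → ℝ) (hφ : ∀ i, MemLorenz (φ i))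
    (D : Set ℝ) (hDsub : D ⊆ Icc (0:ℝ) 1)
    (hDd : ∀ u w : ℝ, 0 ≤ u → u < w → w ≤ 1 → ∃ z ∈ D, u < z ∧ z < w)
    (hlim : ∀ x ∈ D, Tendsto (fun i => φ i x) atTop (nhds (Fx x))) :
    ∃ ℓ : ℝ → ℝ, MemLorenz ℓ ∧ (∀ t ∈ Ico (0:ℝ) 1, ℓ t = sInf (Fx '' (D ∩ Ioi t))) ∧
      ∃ C : Set ℝ, C.Countable ∧ ∀ x ∈ D, x ∉ C → x ≠ 1 → ℓ x = Fx x := by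
  classical
  -- basic facts about Fx on D
  have hF0 : ∀ x ∈ D, 0 ≤ Fx x := fun x hx =>
    ge_of_tendsto' (hlim x hx) (fun i => (hφ i).nonneg (hDsub hx))
  have hF1 : ∀ x ∈ D, Fx x ≤ 1 := fun x hx =>
    le_of_tendsto' (hlim x hx) (fun i => (hφ i).le_one (hDsub hx))
  have hFlex : ∀ x ∈ D, Fx x ≤ x := by
    intro x hx
    apply le_of_tendsto' (hlim x hx)
    intro i
    calc φ i x ≤ x * φ i 1 := (hφ i).le_linear (hDsub hx)
      _ ≤ x * 1 := mul_le_mul_of_nonneg_left ((hφ i).le_one ⟨zero_le_one, le_refl 1⟩) (hDsub hx).1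
      _ = x := mul_one x
  have hFmono : ∀ x ∈ D, ∀ y ∈ D, x ≤ y → Fx x ≤ Fx y := fun x hx y hy hxy =>
    le_of_tendsto_of_tendsto' (hlim x hx) (hlim y hy)
      (fun i => (hφ i).monotoneOn (hDsub hx) (hDsub hy) hxy)
  -- the candidate function below 1
  set g : ℝ → ℝ := fun t => sInf (Fx '' (D ∩ Ioi t)) with hgdef
  have hwit : ∀ t : ℝ, 0 ≤ t → t < 1 → ∃ z ∈ D, t < z ∧ z < 1 := fun t h0 h1 =>
    hDd t 1 h0 h1 le_rfl
  have hne : ∀ t : ℝ, 0 ≤ t → t < 1 → (Fx '' (D ∩ Ioi t)).Nonempty := by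
    intro t h0 h1
    obtain ⟨z, hzD, hz1, hz2⟩ := hwit t h0 h1
    exact ⟨Fx z, ⟨z, ⟨hzD, hz1⟩, rfl⟩⟩
  have hbdd : ∀ t : ℝ, BddBelow (Fx '' (D ∩ Ioi t)) := by
    intro t
    refine ⟨0, ?_⟩
    rintro b ⟨z, ⟨hzD, _⟩, rfl⟩
    exact hF0 z hzD
  have hgleF : ∀ t : ℝ, ∀ z ∈ D, t < z → g t ≤ Fx z :=
    fun t z hz htz => csInf_le (hbdd t) ⟨z, ⟨hz, htz⟩, rfl⟩
  have hg0le : ∀ t : ℝ, 0 ≤ t → t < 1 → 0 ≤ g t := by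
    intro t h0 h1
    apply le_csInf (hne t h0 h1)
    rintro b ⟨z, ⟨hzD, _⟩, rfl⟩
    exact hF0 z hzD
  have hgle1 : ∀ t : ℝ, 0 ≤ t → t < 1 → g t ≤ 1 := by
    intro t h0 h1
    obtain ⟨z, hzD, hz1, hz2⟩ := hwit t h0 h1
    exact le_trans (hgleF t z hzD hz1) (hF1 z hzD)
  have hFleg : ∀ x ∈ D, x < 1 → Fx x ≤ g x := by
    intro x hx hx1
    apply le_csInf (hne x (hDsub hx).1 hx1)
    rintro b ⟨z, ⟨hzD, hzx⟩, rfl⟩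
    exact hFmono x hx z hzD (le_of_lt hzx)
  have hgmono : ∀ s t : ℝ, 0 ≤ s → s ≤ t → t < 1 → g s ≤ g t := by
    intro s t h0 hst h1
    apply csInf_le_csInf (hbdd s) (hne t (h0.trans hst) h1)
    apply image_mono
    exact inter_subset_inter_right _ (Ioi_subset_Ioi hst)
  have hg0 : g 0 = 0 := by
    refine le_antisymm ?_ (hg0le 0 le_rfl one_pos)
    refine le_of_forall_pos_le_add fun ε hε => ?_
    obtain ⟨z, hzD, hz1, hz2⟩ := hDd 0 (min ε 1) le_rfl (lt_min hε one_pos) (min_le_right _ _)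
    calc g 0 ≤ Fx z := hgleF 0 z hzD hz1
      _ ≤ z := hFlex z hzD
      _ ≤ min ε 1 := hz2.le
      _ ≤ 0 + ε := by rw [zero_add]; exact min_le_left _ _
  have happrox : ∀ x : ℝ, 0 ≤ x → x < 1 → ∀ ε : ℝ, 0 < ε →
      ∃ s ∈ D, x < s ∧ s < 1 ∧ Fx s ≤ g x + ε := by
    intro x h0 h1 ε hε
    obtain ⟨b, ⟨s₀, ⟨hs₀D, hs₀x⟩, rfl⟩, hb⟩ :=
      exists_lt_of_csInf_lt (hne x h0 h1) (lt_add_of_pos_right (g x) hε)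
    obtain ⟨z, hzD, hz1, hz2⟩ := hDd x (min s₀ 1) h0
      (lt_min hs₀x h1) (min_le_right _ _)
    refine ⟨z, hzD, hz1, lt_of_lt_of_le hz2 (min_le_right _ _), ?_⟩
    calc Fx z ≤ Fx s₀ := hFmono z hzD s₀ hs₀D (le_of_lt (lt_of_lt_of_le hz2 (min_le_left _ _)))
      _ ≤ g x + ε := hb.le
  -- convexity inequality of g strictly inside [0,1)
  have hkey : ∀ s ∈ D, ∀ u ∈ D, ∀ z ∈ D, ∀ a b : ℝ, 0 ≤ a → 0 ≤ b → a + b = 1 →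
      z ≤ a * s + b * u → Fx z ≤ a * Fx s + b * Fx u := by
    intro s hs u hu z hz a b ha hb hab hzle
    have hq : a * s + b * u ∈ Icc (0:ℝ) 1 := by
      have h1 := hDsub hs; have h2 := hDsub hu
      constructor
      · have := h1.1; have := h2.1; positivity
      · nlinarith [h1.2, h2.2]
    refine le_of_tendsto_of_tendsto' (hlim z hz)
      (((hlim s hs).const_mul a).add ((hlim u hu).const_mul b)) (fun i => ?_)
    have h1 : φ i z ≤ φ i (a * s + b * u) :=
      (hφ i).monotoneOn (hDsub hz) hq hzle
    have h2 := (hφ i).1.2 (hDsub hs) (hDsub hu) ha hb hab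
    simp only [smul_eq_mul] at h2
    exact h1.trans h2
  have hgconv : ∀ x ∈ Ico (0:ℝ) 1, ∀ y ∈ Ico (0:ℝ) 1, ∀ a b : ℝ, 0 < a → 0 < b → a + b = 1 →
      g (a * x + b * y) ≤ a * g x + b * g y := by
    intro x hx y hy a b ha hb hab
    have hp0 : 0 ≤ a * x + b * y := by have := hx.1; have := hy.1; positivity
    have hp1 : a * x + b * y < 1 := by nlinarith [hx.2, hy.2]
    refine le_of_forall_pos_le_add fun ε hε => ?_
    obtain ⟨s, hsD, hxs, hs1, hsval⟩ := happrox x hx.1 hx.2 ε hε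
    obtain ⟨u, huD, hyu, hu1, huval⟩ := happrox y hy.1 hy.2 ε hε
    have hpq : a * x + b * y < a * s + b * u := by nlinarith
    have hq1 : a * s + b * u ≤ 1 := by nlinarith
    obtain ⟨z, hzD, hz1, hz2⟩ := hDd (a * x + b * y) (a * s + b * u) hp0 hpq hq1
    have h3 := hkey s hsD u huD z hzD a b ha.le hb.le hab hz2.le
    calc g (a * x + b * y) ≤ Fx z := hgleF _ z hzD hz1
      _ ≤ a * Fx s + b * Fx u := h3
      _ ≤ a * (g x + ε) + b * (g y + ε) := by
          have := mul_le_mul_of_nonneg_left hsval ha.le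
          have := mul_le_mul_of_nonneg_left huval hb.le
          linarith
      _ = a * g x + b * g y + ε := by nlinarith
  -- the sup value at 1
  set L1 : ℝ := sSup (g '' Ico (0:ℝ) 1) with hL1def
  have hbddA : BddAbove (g '' Ico (0:ℝ) 1) := by
    refine ⟨1, ?_⟩
    rintro b ⟨t, ht, rfl⟩
    exact hgle1 t ht.1 ht.2
  have hneA : (g '' Ico (0:ℝ) 1).Nonempty := ⟨g 0, ⟨0, ⟨le_rfl, one_pos⟩, rfl⟩⟩
  have hgleL1 : ∀ t ∈ Ico (0:ℝ) 1, g t ≤ L1 := fun t ht => le_csSup hbddA ⟨t, ht, rfl⟩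
  have hL1le1 : L1 ≤ 1 := csSup_le hneA (by rintro b ⟨t, ht, rfl⟩; exact hgle1 t ht.1 ht.2)
  have hL1ge0 : 0 ≤ L1 := by
    rw [← hg0]
    exact hgleL1 0 ⟨le_rfl, one_pos⟩
  have hFleL1 : ∀ u ∈ D, u < 1 → Fx u ≤ L1 := by
    intro u hu hu1
    have hu0 : 0 ≤ u := (hDsub hu).1
    set w := (u + 1) / 2 with hwdef2
    have hw1 : w < 1 := by rw [hwdef2]; linarith
    have hw0 : 0 ≤ w := by rw [hwdef2]; linarith
    have huw : u < w := by rw [hwdef2]; linarith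
    have h1 : Fx u ≤ g w := by
      apply le_csInf (hne w hw0 hw1)
      rintro b ⟨z, ⟨hzD, hzw⟩, rfl⟩
      exact hFmono u hu z hzD (le_of_lt (huw.trans hzw))
    exact h1.trans (hgleL1 w ⟨hw0, hw1⟩)
  -- endpoint convexity
  have hconvend : ∀ x ∈ Ico (0:ℝ) 1, ∀ a b : ℝ, 0 < a → 0 < b → a + b = 1 →
      g (a * x + b * 1) ≤ a * g x + b * L1 := by
    intro x hx a b ha hb hab
    have hp0 : 0 ≤ a * x + b * 1 := by have := hx.1; positivity
    have hp1 : a * x + b * 1 < 1 := by nlinarith [hx.2]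
    refine le_of_forall_pos_le_add fun ε hε => ?_
    obtain ⟨s, hsD, hxs, hs1, hsval⟩ := happrox x hx.1 hx.2 ε hε
    have hsx : 0 < a * (s - x) / b := by
      have : 0 < s - x := by linarith
      positivity
    set m := max (a * x + b * 1) (max s (1 - a * (s - x) / b)) with hmdef
    have hm1 : m < 1 := by
      rw [hmdef]
      apply max_lt hp1 (max_lt hs1 (by linarith))
    have hm0 : 0 ≤ m := le_trans hp0 (le_max_left _ _)
    obtain ⟨u, huD, hmu, hu1⟩ := hDd m 1 hm0 hm1 le_rfl
    have hus : s < u := lt_of_le_of_lt (le_trans (le_max_left _ _) (le_max_right _ _)) hmu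
    have huB : 1 - a * (s - x) / b < u :=
      lt_of_le_of_lt (le_trans (le_max_right _ _) (le_max_right _ _)) hmu
    have hpu : a * x + b * 1 < u := lt_of_le_of_lt (le_max_left _ _) hmu
    have hpq : a * x + b * 1 < a * s + b * u := by
      have h6 : b * (1 - u) < b * (a * (s - x) / b) := mul_lt_mul_of_pos_left (by linarith) hb
      rw [mul_comm b (a * (s - x) / b), div_mul_cancel₀ _ (ne_of_gt hb)] at h6
      linarith
    have hq1 : a * s + b * u ≤ 1 := by nlinarith
    obtain ⟨z, hzD, hz1, hz2⟩ := hDd (a * x + b * 1) (a * s + b * u) hp0 hpq hq1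
    have h3 := hkey s hsD u huD z hzD a b ha.le hb.le hab hz2.le
    calc g (a * x + b * 1) ≤ Fx z := hgleF _ z hzD hz1
      _ ≤ a * Fx s + b * Fx u := h3
      _ ≤ a * (g x + ε) + b * L1 := by
          have h4 := mul_le_mul_of_nonneg_left hsval ha.le
          have h5 := mul_le_mul_of_nonneg_left (hFleL1 u huD hu1) hb.le
          linarith
      _ ≤ a * g x + b * L1 + ε := by nlinarith
  -- assemble ℓ
  set ℓ : ℝ → ℝ := fun t => if t < 1 then g t else L1 with hldef
  have hlIco : ∀ t ∈ Ico (0:ℝ) 1, ℓ t = g t := fun t ht => if_pos ht.2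
  have hl1 : ℓ 1 = L1 := if_neg (lt_irrefl 1)
  have hlmem : MemLorenz ℓ := by
    refine ⟨⟨convex_Icc 0 1, ?_⟩, ?_, ?_, ?_⟩
    · intro x hx y hy a b ha hb hab
      simp only [smul_eq_mul]
      rcases eq_or_lt_of_le ha with ha0 | ha
      · rw [← ha0]
        have hb1 : b = 1 := by linarith
        rw [hb1]; simp
      rcases eq_or_lt_of_le hb with hb0 | hb
      · rw [← hb0]
        have ha1 : a = 1 := by linarith
        rw [ha1]; simp
      rcases eq_or_lt_of_le hx.2 with hx1 | hx1
      · rcases eq_or_lt_of_le hy.2 with hy1 | hy1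
        · rw [hx1, hy1]
          have he : a * (1:ℝ) + b * 1 = 1 := by linarith
          rw [he]
          have he2 : a * ℓ 1 + b * ℓ 1 = ℓ 1 := by linear_combination (ℓ 1) * hab
          rw [he2]
        · -- x = 1, y < 1
          rw [hx1]
          have hyI : y ∈ Ico (0:ℝ) 1 := ⟨hy.1, hy1⟩
          have := hconvend y hyI b a hb ha (by linarith)
          have he1 : a * (1:ℝ) + b * y = b * y + a * 1 := by ring
          rw [he1, hlIco y hyI, hl1]
          calc ℓ (b * y + a * 1) = g (b * y + a * 1) := by
                apply hlIco
                constructor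
                · have := hyI.1; positivity
                · nlinarith [hyI.2]
            _ ≤ b * g y + a * L1 := this
            _ = a * L1 + b * g y := by ring
      · rcases eq_or_lt_of_le hy.2 with hy1 | hy1
        · -- x < 1, y = 1
          rw [hy1]
          have hxI : x ∈ Ico (0:ℝ) 1 := ⟨hx.1, hx1⟩
          have := hconvend x hxI a b ha hb hab
          rw [hlIco x hxI, hl1]
          calc ℓ (a * x + b * 1) = g (a * x + b * 1) := by
                apply hlIco
                constructor
                · have := hxI.1; positivity
                · nlinarith [hxI.2]
            _ ≤ a * g x + b * L1 := this
        · -- both < 1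
          have hxI : x ∈ Ico (0:ℝ) 1 := ⟨hx.1, hx1⟩
          have hyI : y ∈ Ico (0:ℝ) 1 := ⟨hy.1, hy1⟩
          have := hgconv x hxI y hyI a b ha hb hab
          rw [hlIco x hxI, hlIco y hyI]
          calc ℓ (a * x + b * y) = g (a * x + b * y) := by
                apply hlIco
                constructor
                · have := hxI.1; have := hyI.1; positivity
                · nlinarith [hxI.2, hyI.2]
            _ ≤ a * g x + b * g y := this
    · intro t ht
      rcases eq_or_lt_of_le ht.2 with ht1 | ht1
      · rw [ht1, hl1]; exact ⟨hL1ge0, hL1le1⟩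
      · rw [hlIco t ⟨ht.1, ht1⟩]
        exact ⟨hg0le t ht.1 ht1, hgle1 t ht.1 ht1⟩
    · rw [hlIco 0 ⟨le_rfl, one_pos⟩, hg0]
    · rw [hl1, hL1def]
      congr 1
      exact image_congr (fun t ht => (hlIco t ht).symm)
  -- the countable exceptional set
  set C : Set ℝ := {x | x ∈ D ∧ x < 1 ∧ Fx x < g x} with hCdef
  have hCc : C.Countable := by
    have hchoice : ∀ x ∈ C, ∃ r : ℚ, Fx x < (r : ℝ) ∧ (r : ℝ) < g x := by
      intro x hx
      exact exists_rat_btwn hx.2.2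
    set q : ℝ → ℚ := fun x => if h : x ∈ C then (hchoice x h).choose else 0 with hqdef
    have hq : ∀ x ∈ C, Fx x < (q x : ℝ) ∧ ((q x : ℝ)) < g x := by
      intro x hx
      rw [hqdef]; simp only [dif_pos hx]
      exact (hchoice x hx).choose_spec
    have hinj : InjOn (fun x => Encodable.encode (q x)) C := by
      intro x hx y hy hxy
      simp only [Encodable.encode_inj] at hxy
      by_contra hne'
      have key : ∀ x' y', x' ∈ C → y' ∈ C → x' < y' → (q x' : ℝ) < (q y' : ℝ) := by
        intro x' y' hx' hy' hlt
        calc (q x' : ℝ) < g x' := (hq x' hx').2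
          _ ≤ Fx y' := hgleF x' y' hy'.1 hlt
          _ < (q y' : ℝ) := (hq y' hy').1
      rcases lt_or_gt_of_ne hne' with h | h
      · have := key x y hx hy h; rw [hxy] at this; exact lt_irrefl _ this
      · have := key y x hy hx h; rw [hxy] at this; exact lt_irrefl _ this
    exact Set.countable_iff_exists_injOn.mpr ⟨_, hinj⟩
  refine ⟨ℓ, hlmem, ?_, C, hCc, ?_⟩
  · intro t ht; rw [hlIco t ht, hgdef]
  · intro x hxD hxC hx1
    have hxlt : x < 1 := lt_of_le_of_ne (hDsub hxD).2 hx1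
    rw [hlIco x ⟨(hDsub hxD).1, hxlt⟩]
    have h1 : Fx x ≤ g x := hFleg x hxD hxlt
    have h2 : ¬ (Fx x < g x) := by
      intro hcon
      exact hxC ⟨hxD, hxlt, hcon⟩
    linarith [lt_or_eq_of_le h1]

lemma interval_int_eq (h : ℝ → ℝ) :
    ∫ x, h x ∂(volume.restrict (Icc (0:ℝ) 1)) = ∫ t in (0:ℝ)..1, h t := by
  rw [intervalIntegral.integral_of_le zero_le_one]
  have heq : volume.restrict (Ioc (0:ℝ) 1) = volume.restrict (Icc (0:ℝ) 1) :=
    Measure.restrict_congr_set Ioc_ae_eq_Icc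
  rw [heq]

set_option synthInstance.maxHeartbeats 1000000 in
open Filter in
lemma isClosed_La (a : ℝ) :
    IsClosed {f : Lp ℝ 1 (volume.restrict (Icc (0:ℝ) 1)) |
      ∃ ℓ : ℝ → ℝ, MemLorenz ℓ ∧ Gini ℓ = a ∧
        (⇑f : ℝ → ℝ) =ᵐ[volume.restrict (Icc (0:ℝ) 1)] ℓ} := by
  set μ := volume.restrict (Icc (0:ℝ) 1) with hμ
  apply IsSeqClosed.isClosed
  intro fs F hmem htend
  choose ℓs hL hG hae using hmem
  have htm : TendstoInMeasure μ (fun n => ⇑(fs n)) atTop ⇑F :=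
    tendstoInMeasure_of_tendsto_Lp htend
  obtain ⟨ns, hns, haes⟩ := htm.exists_seq_tendsto_ae
  have haeall : ∀ᵐ x ∂μ, ∀ n, ⇑(fs n) x = ℓs n x := ae_all_iff.mpr (fun n => hae n)
  set D : Set ℝ :=
    {x | x ∈ Icc (0:ℝ) 1 ∧ Tendsto (fun i => ℓs (ns i) x) atTop (nhds (⇑F x))} with hDdef
  have hDae : ∀ᵐ x ∂μ, x ∈ D := by
    filter_upwards [ae_restrict_mem measurableSet_Icc, haes, haeall] with x h1 h2 h3
    refine ⟨h1, ?_⟩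
    have heq : (fun i => ℓs (ns i) x) = fun i => ⇑(fs (ns i)) x := by
      funext i; exact (h3 (ns i)).symm
    rw [heq]; exact h2
  have hDsub : D ⊆ Icc (0:ℝ) 1 := fun x hx => hx.1
  have hDd : ∀ u w : ℝ, 0 ≤ u → u < w → w ≤ 1 → ∃ z ∈ D, u < z ∧ z < w := by
    intro u w hu huw hw1
    by_contra hcon
    push_neg at hcon
    have hsub2 : Ioo u w ⊆ {x | x ∉ D} := by
      intro x hx hxD
      exact absurd hx.2 (not_lt_of_ge (hcon x hxD hx.1))
    have h0 : μ {x | x ∉ D} = 0 := by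
      rw [measure_eq_zero_iff_ae_notMem]
      filter_upwards [hDae] with x h
      simp only [mem_setOf_eq, not_not]
      exact h
    have h1 : μ (Ioo u w) = 0 := measure_mono_null hsub2 h0
    have hsub3 : Ioo u w ⊆ Icc (0:ℝ) 1 := fun x hx => ⟨le_of_lt (lt_of_le_of_lt hu hx.1),
      le_trans hx.2.le hw1⟩
    rw [hμ, Measure.restrict_apply' measurableSet_Icc,
      inter_eq_self_of_subset_left hsub3, Real.volume_Ioo] at h1
    rw [ENNReal.ofReal_eq_zero] at h1
    linarith
  obtain ⟨ℓ, hmem', hIco, C, hCc, hCeq⟩ := exists_memLorenz_limit (⇑F) (fun i => ℓs (ns i))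
    (fun i => hL (ns i)) D hDsub hDd (fun x hx => hx.2)
  have hC0 : μ C = 0 := by
    have hle : μ C ≤ volume C := Measure.le_iff'.mp Measure.restrict_le_self C
    rw [hCc.measure_zero volume] at hle
    exact le_antisymm hle (zero_le)
  have h10 : μ ({1} : Set ℝ) = 0 := by
    have hle : μ ({1} : Set ℝ) ≤ volume ({1} : Set ℝ) :=
      Measure.le_iff'.mp Measure.restrict_le_self _
    rw [Real.volume_singleton] at hle
    exact le_antisymm hle (zero_le)
  have haeeq : (⇑F : ℝ → ℝ) =ᵐ[μ] ℓ := by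
    filter_upwards [hDae, measure_eq_zero_iff_ae_notMem.mp hC0,
      measure_eq_zero_iff_ae_notMem.mp h10] with x hxD hxC hx1
    exact (hCeq x hxD hxC (by simpa using hx1)).symm
  have hint1 : Tendsto (fun n => ∫ x, ⇑(fs n) x ∂μ) atTop (nhds (∫ x, ⇑F x ∂μ)) :=
    (continuous_integral.tendsto F).comp htend
  have hconst : ∀ n, ∫ x, ⇑(fs n) x ∂μ = (1 - a)/2 := by
    intro n
    rw [integral_congr_ae (hae n), interval_int_eq]
    have := hG n; unfold Gini at this; linarith
  have hFint : ∫ x, ⇑F x ∂μ = (1 - a)/2 := by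
    refine tendsto_nhds_unique hint1 ?_
    have heqf : (fun n => ∫ x, ⇑(fs n) x ∂μ) = fun _ => (1 - a)/2 := funext hconst
    rw [heqf]
    exact tendsto_const_nhds
  have hGini : Gini ℓ = a := by
    unfold Gini
    rw [← interval_int_eq, ← integral_congr_ae haeeq, hFint]
    ring
  exact ⟨ℓ, hmem', hGini, haeeq⟩


/-- For each `a ∈ [0,1]`, the set `L_a = {ℓ ∈ L : G(ℓ) = a}` is convex, and it
is compact as a subset of `L¹([0,1])`. -/
theorem La_convex_and_compact (a : ℝ) (ha : a ∈ Icc (0:ℝ) 1) :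
    Convex ℝ {ℓ : ℝ → ℝ | MemLorenz ℓ ∧ Gini ℓ = a} ∧
    IsCompact {f : Lp ℝ 1 (volume.restrict (Icc (0:ℝ) 1)) |
      ∃ ℓ : ℝ → ℝ, MemLorenz ℓ ∧ Gini ℓ = a ∧
        (⇑f : ℝ → ℝ) =ᵐ[volume.restrict (Icc (0:ℝ) 1)] ℓ} := by
  constructor
  · exact convex_La a
  · apply TotallyBounded.isCompact_of_isClosed
    · apply TotallyBounded.subset _ totallyBounded_T
      rintro F ⟨ℓ, hL, -, hae⟩
      exact ⟨ℓ, hL.monotoneOn, hL.2.1, hae⟩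
    · exact isClosed_La a
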